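/- Let d ≥ 2, let L ≥ 1 be the number of users with user ℓ contributing m_ℓ ≥ 1 samples, let U > 0 and ε > 0, and let T be the ⌈2d/ε⌉-th largest value of the multiset {U·m_1, …, U·m_L} (with T := 0 if ⌈2d/ε⌉ > L). Then the clipping strategy defined by a_j^{(ℓ)} := 0 and b_j^{(ℓ)} := min{T/m_ℓ, U} for all ℓ ∈ [L], j ∈ [m_ℓ] is admissible (0 ≤ a_j^{(ℓ)} ≤ b_j^{(ℓ)} ≤ U) and minimizes the worst-case error functional E^{(d)} over all admissible clipping strategies: for every admissible family {a_j^{(ℓ)}, b_j^{(ℓ)}}, E^{(d)}({a_j^{(ℓ)}, b_j^{(ℓ)}}) is at least the value of E^{(d)} at this strategy. -/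

import Mathlib

open Finset

noncomputable def kthLargest {L : ℕ} (v : Fin L → ℝ) (k : ℕ) : ℝ :=
  (((Finset.univ.val.map v).sort (· ≤ ·)).reverse).getD (k - 1) 0

/-- An admissible clipping strategy: `0 ≤ a ℓ j ≤ b ℓ j ≤ U` for every user `ℓ`
and sample index `j`. -/
def Admissible {L : ℕ} (m : Fin L → ℕ) (U : ℝ)
    (a b : (ℓ : Fin L) → Fin (m ℓ) → ℝ) : Prop :=
  ∀ ℓ j, 0 ≤ a ℓ j ∧ a ℓ j ≤ b ℓ j ∧ b ℓ j ≤ U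

/-- The worst-case error functional `E^(d)` of a clipping strategy (dimension `d ≥ 2`). -/
noncomputable def Ed {L : ℕ} (d : ℕ) (m : Fin L → ℕ) (U ε : ℝ)
    (a b : (ℓ : Fin L) → Fin (m ℓ) → ℝ) : ℝ :=
  (1 / ∑ ℓ, (m ℓ : ℝ)) *
    ((∑ ℓ, ∑ j, max (a ℓ j) (U - b ℓ j)) +
      (2 * (d : ℝ) / ε) * sSup (Set.range fun ℓ => ∑ j, b ℓ j))

lemma sorted_counts {l : List ℝ} (hs : l.Pairwise (· ≤ ·)) {k : ℕ}
    (hk1 : 1 ≤ k) (hkL : k ≤ l.length) {T : ℝ}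
    (hT : T = l[l.length - k]'(by omega)) :
    l.countP (fun b => decide (T < b)) ≤ k - 1 ∧
      k ≤ l.countP (fun b => decide (T ≤ b)) := by
  set n := l.length with hn
  set j0 := n - k with hj0
  have hj0n : j0 < n := by omega
  have hmono : ∀ i j : ℕ, (hi : i < n) → (hj : j < n) → i ≤ j → l[i] ≤ l[j] := by
    intro i j hi hj hij
    exact hs.rel_get_of_le (a := ⟨i, hi⟩) (b := ⟨j, hj⟩) hij
  constructor
  · have hsplit := List.take_append_drop (j0 + 1) l
    have heq : l.countP (fun b => decide (T < b)) =
        (l.take (j0+1)).countP (fun b => decide (T < b)) +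
        (l.drop (j0+1)).countP (fun b => decide (T < b)) := by
      conv_lhs => rw [← hsplit]
      exact List.countP_append
    rw [heq]
    have h1 : (l.take (j0+1)).countP (fun b => decide (T < b)) = 0 := by
      rw [List.countP_eq_zero]
      intro a ha
      obtain ⟨i, hi, rfl⟩ := List.mem_iff_getElem.mp ha
      have hi' : i < j0 + 1 := by
        have h := hi; simp [List.length_take] at h; omega
      have hilen : i < n := by
        have h := hi; simp [List.length_take] at h; omega
      rw [List.getElem_take]
      have : l[i] ≤ l[j0] := hmono i j0 hilen hj0n (by omega)
      simp only [hT]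
      simp
      linarith
    have h2 : (l.drop (j0+1)).countP (fun b => decide (T < b)) ≤ k - 1 := by
      calc (l.drop (j0+1)).countP (fun b => decide (T < b)) ≤ (l.drop (j0+1)).length :=
            List.countP_le_length
        _ = k - 1 := by simp [List.length_drop]; omega
    omega
  · have hsplit := List.take_append_drop j0 l
    have heq : l.countP (fun b => decide (T ≤ b)) =
        (l.take j0).countP (fun b => decide (T ≤ b)) +
        (l.drop j0).countP (fun b => decide (T ≤ b)) := by
      conv_lhs => rw [← hsplit]
      exact List.countP_append
    have h2 : (l.drop j0).countP (fun b => decide (T ≤ b)) = k := by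
      have hall : (l.drop j0).countP (fun b => decide (T ≤ b)) = (l.drop j0).length := by
        rw [List.countP_eq_length]
        intro a ha
        obtain ⟨i, hi, rfl⟩ := List.mem_iff_getElem.mp ha
        rw [List.getElem_drop]
        have hlt : j0 + i < n := by have := hi; simp [List.length_drop] at this; omega
        have : l[j0] ≤ l[j0 + i] := hmono j0 (j0+i) hj0n hlt (by omega)
        simp only [hT]
        simp
        linarith
      rw [hall]; simp [List.length_drop]; omega
    omega

lemma filter_card_eq_countP {L : ℕ} (v : Fin L → ℝ) (p : ℝ → Prop) [DecidablePred p] :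
    (univ.filter (fun ℓ => p (v ℓ))).card
      = ((Finset.univ.val.map v).sort (· ≤ ·)).countP (fun b => decide (p b)) := by
  rw [← Multiset.coe_countP, Multiset.sort_eq, Multiset.countP_map]
  rfl

/-- Theorem 2 of the paper, case `d ≥ 2`.
With `T` the `⌈2d/ε⌉`-th largest value of `{U·m_1, …, U·m_L}` (and `T = 0` if `⌈2d/ε⌉ > L`),
the strategy `a_j^{(ℓ)} = 0`, `b_j^{(ℓ)} = min{T/m_ℓ, U}` is admissible and minimizes
`E^(d)` over all admissible clipping strategies. -/
theorem stmt1 {d L : ℕ} (hd : 2 ≤ d) (hL : 0 < L) (m : Fin L → ℕ) (hm : ∀ ℓ, 1 ≤ m ℓ)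
    (U ε : ℝ) (hU : 0 < U) (hε : 0 < ε)
    (T : ℝ) (hT : T = kthLargest (fun ℓ => U * (m ℓ : ℝ)) ⌈(2 * (d : ℝ)) / ε⌉₊) :
    Admissible m U (fun _ _ => (0 : ℝ)) (fun ℓ _ => min (T / (m ℓ : ℝ)) U) ∧
    ∀ a b, Admissible m U a b →
      Ed d m U ε (fun _ _ => (0 : ℝ)) (fun ℓ _ => min (T / (m ℓ : ℝ)) U) ≤ Ed d m U ε a b := by
  classical
  have hc : (0:ℝ) < 2 * (d:ℝ) / ε := by positivity
  set c : ℝ := 2 * (d:ℝ) / ε with hcdef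
  set k : ℕ := ⌈c⌉₊ with hkdef
  have hk1 : 1 ≤ k := Nat.one_le_ceil_iff.mpr hc
  have hck : c ≤ (k:ℝ) := Nat.le_ceil c
  have hkc : ((k:ℝ) - 1) < c := by
    have h : (k - 1 : ℕ) < ⌈c⌉₊ := by omega
    have h2 := Nat.lt_ceil.mp h
    rw [Nat.cast_sub hk1] at h2
    exact_mod_cast h2
  set v : Fin L → ℝ := fun ℓ => U * (m ℓ : ℝ) with hvdef
  have hv0 : ∀ ℓ, 0 < v ℓ := by
    intro ℓ
    have : (0:ℝ) < (m ℓ : ℝ) := by exact_mod_cast hm ℓ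
    positivity
  set l : List ℝ := (Finset.univ.val.map v).sort (· ≤ ·) with hldef
  have hlen : l.length = L := by
    simp [hldef]
  have hsorted : l.Pairwise (· ≤ ·) := Multiset.pairwise_sort _ _
  have hTl : T = l.reverse.getD (k - 1) 0 := hT
  -- case analysis on k ≤ L
  have hmain : 0 ≤ T ∧ (univ.filter (fun ℓ => T < v ℓ)).card ≤ k - 1 ∧
      (k ≤ (univ.filter (fun ℓ => T ≤ v ℓ)).card ∨ T = 0) := by
    by_cases hkL : k ≤ L
    · have hidx : l.length - k < l.length := by omega
      have hTget : T = l[l.length - k]'hidx := by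
        rw [hTl, List.getD_eq_getElem _ _ (by simp [hlen]; omega : k - 1 < l.reverse.length)]
        rw [List.getElem_reverse]
        congr 1
        omega
      have hcounts := sorted_counts hsorted hk1 (by omega) hTget
      have hmem : ∃ ℓ, v ℓ = T := by
        have hTmem : T ∈ l := hTget ▸ List.getElem_mem _
        have : T ∈ (Finset.univ.val.map v) := by
          rw [← Multiset.sort_eq (Finset.univ.val.map v) (· ≤ ·)]
          exact hTmem
        obtain ⟨ℓ, _, h⟩ := Multiset.mem_map.mp this
        exact ⟨ℓ, h⟩
      obtain ⟨ℓ0, hℓ0⟩ := hmem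
      refine ⟨by rw [← hℓ0]; exact (hv0 ℓ0).le, ?_, Or.inl ?_⟩
      · rw [filter_card_eq_countP v (fun b => T < b)]
        exact hcounts.1
      · rw [filter_card_eq_countP v (fun b => T ≤ b)]
        exact hcounts.2
    · have hT0 : T = 0 := by
        rw [hTl, List.getD_eq_default]
        simp [hlen]; omega
      refine ⟨hT0.ge, ?_, Or.inr hT0⟩
      calc (univ.filter (fun ℓ => T < v ℓ)).card ≤ (univ : Finset (Fin L)).card :=
            Finset.card_filter_le _ _
        _ = L := by simp
        _ ≤ k - 1 := by omega
  obtain ⟨hT0, hNgt, hNgeOr⟩ := hmain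
  have hexists : ∃ ℓ0, T ≤ v ℓ0 := by
    rcases hNgeOr with h | h
    · have : 0 < (univ.filter (fun ℓ => T ≤ v ℓ)).card := by omega
      obtain ⟨ℓ0, hℓ0⟩ := Finset.card_pos.mp this
      exact ⟨ℓ0, (Finset.mem_filter.mp hℓ0).2⟩
    · exact ⟨⟨0, hL⟩, h ▸ (hv0 _).le⟩
  -- admissibility
  have hadm : Admissible m U (fun _ _ => (0:ℝ)) (fun ℓ _ => min (T / (m ℓ : ℝ)) U) := by
    intro ℓ j
    have hm0 : (0:ℝ) < (m ℓ : ℝ) := by exact_mod_cast hm ℓ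
    exact ⟨le_refl 0, le_min (div_nonneg hT0 hm0.le) hU.le, min_le_right _ _⟩
  refine ⟨hadm, ?_⟩
  intro a b hab
  -- common quantities
  have hM : (0:ℝ) < ∑ ℓ, (m ℓ : ℝ) := by
    apply Finset.sum_pos
    · intro ℓ _; exact_mod_cast hm ℓ
    · exact ⟨⟨0, hL⟩, Finset.mem_univ _⟩
  -- value of the proposed strategy
  have hbval : ∀ ℓ : Fin L, (∑ _j : Fin (m ℓ), min (T/(m ℓ:ℝ)) U) = min T (v ℓ) := by
    intro ℓ
    have hm0 : (0:ℝ) < (m ℓ : ℝ) := by exact_mod_cast hm ℓ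
    rw [Finset.sum_const, card_univ, Fintype.card_fin, nsmul_eq_mul]
    rw [mul_min_of_nonneg _ _ hm0.le]
    rw [mul_div_cancel₀ T hm0.ne', hvdef]
    ring_nf
  have hsum1 : ∀ ℓ : Fin L, (∑ _j : Fin (m ℓ), max (0:ℝ) (U - min (T/(m ℓ:ℝ)) U))
      = max (v ℓ - T) 0 := by
    intro ℓ
    have hm0 : (0:ℝ) < (m ℓ : ℝ) := by exact_mod_cast hm ℓ
    have h1 : max (0:ℝ) (U - min (T/(m ℓ:ℝ)) U) = U - min (T/(m ℓ:ℝ)) U :=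
      max_eq_right (by have := min_le_right (T/(m ℓ:ℝ)) U; linarith)
    rw [h1, Finset.sum_const, card_univ, Fintype.card_fin, nsmul_eq_mul]
    rw [mul_sub, mul_min_of_nonneg _ _ hm0.le, mul_div_cancel₀ T hm0.ne']
    rcases le_total T (v ℓ) with h | h
    · rw [min_eq_left (by simpa [hvdef, mul_comm] using h), max_eq_left (by linarith)]
      try simp only [hvdef]
      ring
    · rw [min_eq_right (by simpa [hvdef, mul_comm] using h), max_eq_right (by linarith)]
      try simp only [hvdef]
      ring
  have hSup1 : sSup (Set.range fun ℓ => ∑ _j : Fin (m ℓ), min (T/(m ℓ:ℝ)) U) = T := by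
    have hfun : (fun ℓ => ∑ _j : Fin (m ℓ), min (T/(m ℓ:ℝ)) U) = fun ℓ => min T (v ℓ) :=
      funext hbval
    rw [hfun]
    apply IsGreatest.csSup_eq
    obtain ⟨ℓ0, hℓ0⟩ := hexists
    constructor
    · exact ⟨ℓ0, min_eq_left hℓ0⟩
    · rintro x ⟨ℓ, rfl⟩; exact min_le_left _ _
  -- the generic strategy
  set S : ℝ := sSup (Set.range fun ℓ => ∑ j, b ℓ j) with hSdef
  have hBdd : BddAbove (Set.range fun ℓ => ∑ j, b ℓ j) := (Set.finite_range _).bddAbove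
  have hBS : ∀ ℓ, (∑ j, b ℓ j) ≤ S := fun ℓ => le_csSup hBdd ⟨ℓ, rfl⟩
  have hS0 : 0 ≤ S := by
    refine le_trans ?_ (hBS ⟨0, hL⟩)
    apply Finset.sum_nonneg
    intro j _
    have h := hab ⟨0, hL⟩ j
    linarith [h.1, h.2.1]
  have hlow : ∀ ℓ, max (v ℓ - S) 0 ≤ ∑ j, max (a ℓ j) (U - b ℓ j) := by
    intro ℓ
    apply max_le
    · have h1 : (∑ _j : Fin (m ℓ), U) = v ℓ := by
        rw [Finset.sum_const, card_univ, Fintype.card_fin, nsmul_eq_mul, hvdef, mul_comm]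
      have h2 : v ℓ - (∑ j, b ℓ j) ≤ ∑ j, max (a ℓ j) (U - b ℓ j) := by
        rw [← h1, ← Finset.sum_sub_distrib]
        apply Finset.sum_le_sum
        intro j _
        exact le_max_right _ _
      linarith [hBS ℓ]
    · apply Finset.sum_nonneg
      intro j _
      exact le_trans (hab ℓ j).1 (le_max_left _ _)
  -- key comparison
  have hNgtR : ((univ.filter (fun ℓ => T < v ℓ)).card : ℝ) ≤ c := by
    have h1 : ((univ.filter (fun ℓ => T < v ℓ)).card : ℝ) ≤ ((k - 1 : ℕ) : ℝ) := by
      exact_mod_cast hNgt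
    rw [Nat.cast_sub hk1] at h1
    push_cast at h1
    linarith
  have hkey : (∑ ℓ, max (v ℓ - T) 0) + c * T ≤ (∑ ℓ, max (v ℓ - S) 0) + c * S := by
    rcases le_total T S with hTS | hST
    · -- T ≤ S
      have hpt : ∀ ℓ, max (v ℓ - T) 0 ≤ max (v ℓ - S) 0 + (if T < v ℓ then S - T else 0) := by
        intro ℓ
        by_cases h : T < v ℓ
        · rw [if_pos h, max_eq_left (show (0:ℝ) ≤ v ℓ - T by linarith)]
          have := le_max_left (v ℓ - S) 0
          linarith
        · push_neg at h
          rw [if_neg (not_lt.mpr h), max_eq_right (show v ℓ - T ≤ 0 by linarith)]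
          simp [le_max_right]
      have hsum := Finset.sum_le_sum (s := univ) (fun ℓ _ => hpt ℓ)
      rw [Finset.sum_add_distrib, ← Finset.sum_filter, Finset.sum_const, nsmul_eq_mul] at hsum
      have hN : ((univ.filter (fun ℓ => T < v ℓ)).card : ℝ) * (S - T) ≤ c * (S - T) := by
        apply mul_le_mul_of_nonneg_right hNgtR (by linarith)
      nlinarith
    · -- S ≤ T
      rcases hNgeOr with hNge | hT0'
      · have hpt : ∀ ℓ, max (v ℓ - T) 0 + (if T ≤ v ℓ then T - S else 0) ≤ max (v ℓ - S) 0 := by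
          intro ℓ
          by_cases h : T ≤ v ℓ
          · rw [if_pos h, max_eq_left (show (0:ℝ) ≤ v ℓ - T by linarith)]
            have := le_max_left (v ℓ - S) 0
            linarith
          · rw [if_neg h]
            push_neg at h
            simp only [add_zero]
            exact max_le_max (by linarith) le_rfl
        have hsum := Finset.sum_le_sum (s := univ) (fun ℓ _ => hpt ℓ)
        rw [Finset.sum_add_distrib, ← Finset.sum_filter, Finset.sum_const, nsmul_eq_mul] at hsum
        have hNgeR : c ≤ ((univ.filter (fun ℓ => T ≤ v ℓ)).card : ℝ) := by
          have : (k : ℝ) ≤ ((univ.filter (fun ℓ => T ≤ v ℓ)).card : ℝ) := by exact_mod_cast hNge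
          linarith
        have hN : c * (T - S) ≤ ((univ.filter (fun ℓ => T ≤ v ℓ)).card : ℝ) * (T - S) := by
          apply mul_le_mul_of_nonneg_right hNgeR (by linarith)
        nlinarith
      · have hSeq : S = 0 := le_antisymm (hT0' ▸ hST) hS0
        rw [hT0', hSeq]
  -- conclude
  unfold Ed
  apply mul_le_mul_of_nonneg_left _ (by positivity : (0:ℝ) ≤ 1 / ∑ ℓ, (m ℓ : ℝ))
  calc (∑ ℓ, ∑ _j : Fin (m ℓ), max (0:ℝ) (U - min (T/(m ℓ:ℝ)) U)) +
        (2 * (d:ℝ) / ε) * sSup (Set.range fun ℓ => ∑ _j : Fin (m ℓ), min (T/(m ℓ:ℝ)) U)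
      = (∑ ℓ, max (v ℓ - T) 0) + c * T := by
        rw [hSup1]
        congr 1
        exact Finset.sum_congr rfl (fun ℓ _ => hsum1 ℓ)
    _ ≤ (∑ ℓ, max (v ℓ - S) 0) + c * S := hkey
    _ ≤ (∑ ℓ, ∑ j, max (a ℓ j) (U - b ℓ j)) + (2 * (d:ℝ) / ε) * S := by
        apply add_le_add_left
        exact Finset.sum_le_sum (fun ℓ _ => hlow ℓ)
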